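/- Let k ⊆ K be algebraically closed fields, let f₁,...,f_m ∈ k[x₁,...,x_n], and let V_k ⊆ k^n and V_K ⊆ K^n be their common vanishing sets. If a polynomial g ∈ K[x₁,...,x_n] vanishes on V_k (viewed inside K^n), then g vanishes on V_K. Equivalently, V_k is Zariski dense in V_K. -/

import Mathlib

open MvPolynomial

/-- Let `k ⊆ K` be algebraically closed fields, `f 1, ..., f m ∈ k[x₁,...,xₙ]`, with common
vanishing sets `V_k ⊆ kⁿ` and `V_K ⊆ Kⁿ`.  If a polynomial `g ∈ K[x₁,...,xₙ]` vanishes on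
`V_k` (viewed inside `Kⁿ`), then `g` vanishes on `V_K`; i.e. `V_k` is Zariski dense in `V_K`. -/
theorem stmt_3 (k K : Type*) [Field k] [Field K] [IsAlgClosed k] [IsAlgClosed K]
    [Algebra k K] (n m : ℕ) (f : Fin m → MvPolynomial (Fin n) k)
    (g : MvPolynomial (Fin n) K)
    (hg : ∀ p : Fin n → k, (∀ i, eval p (f i) = 0) →
      eval (fun x => algebraMap k K (p x)) g = 0) :
    ∀ q : Fin n → K, (∀ i, eval q (map (algebraMap k K) (f i)) = 0) → eval q g = 0 := by
  classical
  intro q hq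
  set φ : k →+* K := algebraMap k K with hφ
  set I : Ideal (MvPolynomial (Fin n) k) := Ideal.span (Set.range f) with hIdef
  -- elements of the radical of I vanish at q after mapping to K
  have key : ∀ h ∈ I.radical, eval q (map φ h) = 0 := by
    set Ψ : MvPolynomial (Fin n) k →+* K := (eval q).comp (map φ) with hΨ
    have hprime : (RingHom.ker Ψ).IsPrime := RingHom.ker_isPrime Ψ
    have hIle : I ≤ RingHom.ker Ψ := by
      rw [hIdef, Ideal.span_le]
      rintro _ ⟨i, rfl⟩
      simpa [hΨ, RingHom.mem_ker] using hq i
    intro h hh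
    have := (hprime.radical_le_iff.mpr hIle) hh
    simpa [hΨ, RingHom.mem_ker] using this
  -- basis of K over k
  set B := Module.Basis.ofVectorSpace k K with hB
  set T : Finset (Module.Basis.ofVectorSpaceIndex k K) :=
    g.support.biUnion (fun d => (B.repr (coeff d g)).support) with hT
  set gb : Module.Basis.ofVectorSpaceIndex k K → MvPolynomial (Fin n) k :=
    fun b => ∑ d ∈ g.support, monomial d (B.repr (coeff d g) b) with hgb
  have hcoeff : ∀ b d, coeff d (gb b) = B.repr (coeff d g) b := by
    intro b d
    rw [hgb]
    simp only [coeff_sum, coeff_monomial]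
    by_cases hd : d ∈ g.support
    · rw [Finset.sum_eq_single d (fun e _ he => by simp [he]) (fun h => absurd hd h)]
      simp
    · rw [Finset.sum_eq_zero]
      · simp [notMem_support_iff.mp hd]
      · intro e he
        rcases eq_or_ne e d with rfl | hne
        · exact absurd he hd
        · simp [hne]
  -- decomposition of g
  have hdecomp : g = ∑ b ∈ T, C (B b) * map φ (gb b) := by
    apply MvPolynomial.ext
    intro d
    rw [coeff_sum]
    simp only [coeff_C_mul, coeff_map, hcoeff]
    have : ∀ b, B b * φ (B.repr (coeff d g) b) = B.repr (coeff d g) b • B b := by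
      intro b
      rw [Algebra.smul_def, mul_comm]
    rw [Finset.sum_congr rfl fun b _ => this b]
    by_cases hd : d ∈ g.support
    · have hsub : (B.repr (coeff d g)).support ⊆ T := by
        intro b hb
        exact Finset.mem_biUnion.mpr ⟨d, hd, hb⟩
      rw [← Finset.sum_subset hsub (fun b _ hb => by
        simp [Finsupp.notMem_support_iff.mp hb])]
      conv_lhs => rw [← B.linearCombination_repr (coeff d g)]
      simp [Finsupp.linearCombination_apply, Finsupp.sum]
    · rw [notMem_support_iff.mp hd, Finset.sum_eq_zero]
      intro b _
      simp [notMem_support_iff.mp hd]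
  -- each gb b vanishes on V_k
  have hvanish : ∀ b ∈ T, gb b ∈ I.radical := by
    intro b hb
    rw [← vanishingIdeal_zeroLocus_eq_radical (K := k)]
    rw [mem_vanishingIdeal_iff]
    intro x hx
    have hx' : ∀ i, eval x (f i) = 0 := fun i =>
      hx (f i) (Ideal.subset_span ⟨i, rfl⟩)
    have h0 := hg x hx'
    rw [hdecomp, map_sum] at h0
    have heval : ∀ b', eval (fun y => φ (x y)) (C (B b') * map φ (gb b'))
        = (eval x (gb b')) • B b' := by
      intro b'
      rw [eval_mul, eval_C, eval_map]
      have : eval₂ φ (fun y => φ (x y)) (gb b') = φ (eval x (gb b')) := by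
        have h1 := eval₂_comp_left φ (RingHom.id k) x (gb b')
        simp only [RingHom.comp_id] at h1
        exact h1.symm
      rw [this, Algebra.smul_def, mul_comm]
    rw [Finset.sum_congr rfl fun b' _ => heval b'] at h0
    exact linearIndependent_iff'.mp B.linearIndependent T _ h0 b hb
  -- conclude
  rw [hdecomp, map_sum, Finset.sum_eq_zero]
  intro b hb
  rw [eval_mul, key (gb b) (hvanish b hb), mul_zero]
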